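/- Let P be a finite set of primes, p ∈ P with minimal ‖p‖/log_3(p). For every ε > 0, there exist only finitely many n with ‖n‖_P/log_3(n) < ‖p‖/log_3(p) − ε. -/

import Mathlib

/-- `IsExpr n m` : the positive integer `n` is representable by an arithmetic
expression in basis `{1, +, ·}` containing exactly `m` ones. -/
inductive IsExpr : ℕ → ℕ → Prop
  | one : IsExpr 1 1
  | add {a b m n : ℕ} : IsExpr a m → IsExpr b n → IsExpr (a + b) (m + n)
  | mul {a b m n : ℕ} : IsExpr a m → IsExpr b n → IsExpr (a * b) (m + n)

/-- Integer complexity `‖n‖`: the minimum number of 1's needed to represent `n`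
using 1's, addition and multiplication. -/
noncomputable def cpx (n : ℕ) : ℕ := sInf {m | IsExpr n m}

/-- `PAlg P n c` : the `P`-algorithm, run on the positive integer `n`, builds an
expression for `n` in basis `{1, +, ·}` containing `c` ones.  The algorithm
represents `1` as `1`; represents `p ∈ P` by a shortest expression (of `cpx p`
ones); if `n ∉ P` is divisible by some `p ∈ P` it writes `n = p · (n / p)` and
recurses on `n / p`; otherwise it writes `n = 1 + (n - 1)` and recurses on `n - 1`. -/
inductive PAlg (P : Finset ℕ) : ℕ → ℕ → Prop
  | one : PAlg P 1 1
  | base {p : ℕ} : p ∈ P → PAlg P p (cpx p)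
  | div {n p c : ℕ} : 1 < n → n ∉ P → p ∈ P → p ∣ n →
      PAlg P (n / p) c → PAlg P n (cpx p + c)
  | step {n c : ℕ} : 1 < n → (∀ p ∈ P, ¬ p ∣ n) →
      PAlg P (n - 1) c → PAlg P n (c + 1)

/-- `‖n‖_P` : the number of ones in the expression built by the `P`-algorithm. -/
noncomputable def cpxP (P : Finset ℕ) (n : ℕ) : ℕ := sInf {c | PAlg P n c}

/-- if `p ∈ P` has minimal logarithmic complexity among `P`, then
for every `ε > 0` there are only finitely many `n` with
`‖n‖_P/log₃ n < ‖p‖/log₃ p − ε`. -/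
theorem palg_defect (P : Finset ℕ) (hprime : ∀ r ∈ P, r.Prime)
    (α : ℝ) (hα : 0 ≤ α) (hQ : ∀ q ∈ P, α * Real.log q ≤ (cpx q : ℝ))
    {n c : ℕ} (h : PAlg P n c) :
    α * Real.log n - α * Real.log (⌈α⌉₊ + 1 : ℕ) ≤ (c : ℝ) := by
  have hN1 : (1 : ℝ) ≤ ((⌈α⌉₊ + 1 : ℕ) : ℝ) := by exact_mod_cast Nat.one_le_iff_ne_zero.mpr (by omega)
  have hC0 : 0 ≤ α * Real.log ((⌈α⌉₊ + 1 : ℕ) : ℝ) :=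
    mul_nonneg hα (Real.log_nonneg hN1)
  induction h with
  | one =>
    simp only [Nat.cast_one, Real.log_one, mul_zero, zero_sub]
    linarith
  | base hq =>
    have := hQ _ hq
    linarith
  | @div n q c h1 hnP hqP hqd hrec ih =>
    have hq2 := (hprime q hqP).two_le
    have hmul : (n : ℝ) = (q : ℝ) * ((n / q : ℕ) : ℝ) := by
      rw [← Nat.cast_mul]
      exact_mod_cast (Nat.mul_div_cancel' hqd).symm
    have hq0 : (q : ℝ) ≠ 0 := by positivity
    have hd1 : 1 ≤ n / q := (Nat.one_le_div_iff (by omega)).mpr (Nat.le_of_dvd (by omega) hqd)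
    have hd0 : ((n / q : ℕ) : ℝ) ≠ 0 := by
      have : (1:ℝ) ≤ ((n / q : ℕ) : ℝ) := by exact_mod_cast hd1
      linarith
    have hlog : Real.log n = Real.log q + Real.log ((n / q : ℕ) : ℝ) := by
      rw [hmul, Real.log_mul hq0 hd0]
    have hq' := hQ _ hqP
    push_cast at ih hq' ⊢
    rw [hlog, mul_add]
    push_cast
    linarith
  | @step n c h1 hnd hrec ih =>
    have hn1 : ((n - 1 : ℕ) : ℝ) = (n : ℝ) - 1 := by
      push_cast [Nat.cast_sub (by omega : 1 ≤ n)]; ring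
    push_cast
    by_cases hbig : ((⌈α⌉₊ + 1 : ℕ) : ℝ) < (n : ℝ)
    · -- n - 1 ≥ N > α ; log n - log (n-1) ≤ 1/(n-1) ≤ 1/α ... and α/(n-1) ≤ 1
      have hα_lt : α < (n : ℝ) - 1 := by
        have : α ≤ (⌈α⌉₊ : ℝ) := Nat.le_ceil α
        have h2 : ((⌈α⌉₊ : ℕ) : ℝ) + 1 < (n : ℝ) := by push_cast at hbig ⊢; linarith
        linarith
      have hpos : (0 : ℝ) < (n : ℝ) - 1 := lt_of_le_of_lt hα hα_lt
      have hlogdiff : Real.log n - Real.log ((n:ℝ) - 1) ≤ 1 / ((n:ℝ) - 1) := by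
        have h0 : (0:ℝ) < (n:ℝ) / ((n:ℝ) - 1) := by positivity
        have := Real.log_le_sub_one_of_pos h0
        rw [Real.log_div (by positivity) (ne_of_gt hpos)] at this
        have heq : (n:ℝ) / ((n:ℝ) - 1) - 1 = 1 / ((n:ℝ) - 1) := by field_simp; ring
        linarith [heq ▸ this]
      have hstep : α * (Real.log n - Real.log ((n:ℝ) - 1)) ≤ 1 := by
        calc α * (Real.log n - Real.log ((n:ℝ) - 1)) ≤ α * (1 / ((n:ℝ)-1)) := by
              apply mul_le_mul_of_nonneg_left hlogdiff hα
          _ ≤ 1 := by rw [mul_one_div, div_le_one hpos]; linarith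
      have ih' := ih
      rw [hn1] at ih'
      rw [mul_sub] at hstep
      push_cast at ih' ⊢
      linarith
    · push_neg at hbig
      have hn0 : (1:ℝ) ≤ (n:ℝ) := by exact_mod_cast (by omega : 1 ≤ n)
      have : Real.log (n:ℝ) ≤ Real.log ((⌈α⌉₊ + 1 : ℕ) : ℝ) :=
        Real.log_le_log (by linarith) hbig
      have : α * Real.log (n:ℝ) ≤ α * Real.log ((⌈α⌉₊ + 1 : ℕ) : ℝ) :=
        mul_le_mul_of_nonneg_left this hα
      have hc0 : (0:ℝ) ≤ (c:ℝ) := Nat.cast_nonneg c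
      push_cast at this ⊢
      linarith

theorem exists_palg (P : Finset ℕ) (hprime : ∀ r ∈ P, r.Prime) :
    ∀ n, 1 ≤ n → ∃ c, PAlg P n c := by
  intro n
  induction n using Nat.strong_induction_on with
  | _ n ih =>
    intro hn
    rcases eq_or_lt_of_le hn with h1 | h1
    · exact ⟨1, h1 ▸ PAlg.one⟩
    by_cases hnP : n ∈ P
    · exact ⟨cpx n, PAlg.base hnP⟩
    by_cases hdvd : ∃ q ∈ P, q ∣ n
    · obtain ⟨q, hq, hqd⟩ := hdvd
      have hq2 := (hprime q hq).two_le
      have hlt : n / q < n := Nat.div_lt_self (by omega) hq2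
      have hge : 1 ≤ n / q := (Nat.one_le_div_iff (by omega)).mpr (Nat.le_of_dvd (by omega) hqd)
      obtain ⟨c, hc⟩ := ih _ hlt hge
      exact ⟨cpx q + c, PAlg.div h1 hnP hq hqd hc⟩
    · push_neg at hdvd
      obtain ⟨c, hc⟩ := ih (n-1) (by omega) (by omega)
      exact ⟨c + 1, PAlg.step h1 hdvd hc⟩

theorem stmt16 (P : Finset ℕ) (hP : P.Nonempty) (hprime : ∀ r ∈ P, r.Prime)
    (p : ℕ) (hp : p ∈ P)
    (hmin : ∀ r ∈ P, (cpx p : ℝ) / Real.logb 3 p ≤ (cpx r : ℝ) / Real.logb 3 r)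
    (ε : ℝ) (hε : 0 < ε) :
    {n : ℕ | 1 < n ∧
      (cpxP P n : ℝ) / Real.logb 3 n < (cpx p : ℝ) / Real.logb 3 p - ε}.Finite := by
  have hlog3 : (0:ℝ) < Real.log 3 := Real.log_pos (by norm_num)
  have hp2 := (hprime p hp).two_le
  have hlogp : (0:ℝ) < Real.log p := Real.log_pos (by exact_mod_cast hp2)
  set α : ℝ := (cpx p : ℝ) / Real.log p with hαdef
  have hα : 0 ≤ α := div_nonneg (Nat.cast_nonneg _) hlogp.le
  have hQ : ∀ q ∈ P, α * Real.log q ≤ (cpx q : ℝ) := by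
    intro q hq
    have hq2 := (hprime q hq).two_le
    have hlogq : (0:ℝ) < Real.log q := Real.log_pos (by exact_mod_cast hq2)
    have h := hmin q hq
    rw [Real.logb, Real.logb, div_div_eq_mul_div, div_div_eq_mul_div,
      div_le_div_iff₀ hlogp hlogq] at h
    have h2 : ((cpx p : ℝ) * Real.log q) * Real.log 3 ≤ ((cpx q : ℝ) * Real.log p) * Real.log 3 := by
      nlinarith [h]
    have h' : (cpx p : ℝ) * Real.log q ≤ (cpx q : ℝ) * Real.log p :=
      le_of_mul_le_mul_right h2 hlog3
    rw [hαdef, div_mul_eq_mul_div, div_le_iff₀ hlogp]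
    linarith
  set C : ℝ := α * Real.log ((⌈α⌉₊ + 1 : ℕ) : ℝ) with hCdef
  set M : ℕ := ⌈Real.exp (C * Real.log 3 / ε)⌉₊ with hM
  apply Set.Finite.subset (Set.finite_Iic M)
  rintro n ⟨hn1, hlt⟩
  have hn1' : (1:ℝ) < (n:ℝ) := by exact_mod_cast hn1
  have hlogn : (0:ℝ) < Real.log n := Real.log_pos hn1'
  have hbn : (0:ℝ) < Real.logb 3 n := by
    rw [Real.logb]; positivity
  obtain ⟨c, hc⟩ := exists_palg P hprime n (by omega)
  have hpal : PAlg P n (cpxP P n) := Nat.sInf_mem (Set.nonempty_of_mem hc)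
  have hdef := palg_defect P hprime α hα hQ hpal
  have h1 : (cpxP P n : ℝ) < ((cpx p : ℝ) / Real.logb 3 p - ε) * Real.logb 3 n :=
    (div_lt_iff₀ hbn).mp hlt
  have hexp : ((cpx p : ℝ) / Real.logb 3 p - ε) * Real.logb 3 n
      = α * Real.log n - ε * Real.log n / Real.log 3 := by
    rw [Real.logb, Real.logb, hαdef]
    field_simp
  rw [hexp] at h1
  have h2 : ε * Real.log n / Real.log 3 < C := by linarith
  have h3 : Real.log n < C * Real.log 3 / ε := by
    rw [lt_div_iff₀ hε]
    rw [div_lt_iff₀ hlog3] at h2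
    linarith
  have h4 : (n : ℝ) < Real.exp (C * Real.log 3 / ε) := by
    rw [← Real.exp_log (by linarith : (0:ℝ) < (n:ℝ))]
    exact Real.exp_lt_exp.mpr h3
  have h5 : (n : ℝ) ≤ (M : ℝ) := h4.le.trans (Nat.le_ceil _)
  exact_mod_cast h5
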